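/- Iterated Wolff potential lower bound (Grigor'yan–Verbitsky type): let $p > 1$, $0 < \alpha p < n$, and $\omega$ a nonnegative Borel measure on $\mathbb{R}^n$. Then for every $r > 0$ and all $x \in \mathbb{R}^n$, $\mathbf{W}_{\alpha,p}\left((\mathbf{W}_{\alpha,p}\omega)^r \, d\omega\right)(x) \ge \kappa^{r/(p-1)} \left(\mathbf{W}_{\alpha,p}\omega(x)\right)^{r/(p-1)+1}$, where $\kappa > 0$ depends only on $n$ and $p$. -/

import Mathlib

open MeasureTheory Metric ENNReal

/-- The Wolff potential `W_{α,p}μ(x) = ∫₀^∞ (μ(B(x,t))/t^{n-αp})^{1/(p-1)} dt/t`. -/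
noncomputable def wolff (n : ℕ) (α p : ℝ)
    (μ : Measure (EuclideanSpace ℝ (Fin n))) (x : EuclideanSpace ℝ (Fin n)) : ℝ≥0∞ :=
  ∫⁻ t in Set.Ioi (0 : ℝ),
    (μ (ball x t) / ENNReal.ofReal (t ^ ((n : ℝ) - α * p))) ^ (1 / (p - 1)) /
      ENNReal.ofReal t

section aux
open Set
lemma aux_rpow_split {b q s : ℝ} (hs : s ≠ 0) :
    s ^ (q-1) * (b - s) = b * s ^ (q-1) - s ^ q := by
  have hsq : s ^ q = s ^ (q-1) * s := by
    have h := Real.rpow_add_one hs (q-1)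
    rw [sub_add_cancel] at h
    exact h
  rw [hsq]; ring

lemma aux_lint_rpow_mul {b q : ℝ} (hb : 0 < b) (hq : 0 < q) :
    ∫⁻ s in Set.Ioo 0 b, ENNReal.ofReal (s ^ (q-1)) * ENNReal.ofReal (b - s)
      = ENNReal.ofReal (b ^ (q+1) / (q*(q+1))) := by
  have hi1 : IntegrableOn (fun s : ℝ => s ^ (q-1)) (Set.Ioo 0 b) volume :=
    ((intervalIntegrable_iff_integrableOn_Ioc_of_le hb.le).1
      (intervalIntegral.intervalIntegrable_rpow' (by linarith))).mono_set Set.Ioo_subset_Ioc_self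
  have hi2 : IntegrableOn (fun s : ℝ => s ^ q) (Set.Ioo 0 b) volume :=
    ((intervalIntegrable_iff_integrableOn_Ioc_of_le hb.le).1
      (intervalIntegral.intervalIntegrable_rpow' (by linarith))).mono_set Set.Ioo_subset_Ioc_self
  have h3 : IntegrableOn (fun s : ℝ => b * s ^ (q-1) - s ^ q) (Set.Ioo 0 b) volume :=
    (hi1.const_mul b).sub hi2
  have hInt : IntegrableOn (fun s : ℝ => s ^ (q-1) * (b - s)) (Set.Ioo 0 b) volume :=
    h3.congr_fun (fun s hs => (aux_rpow_split hs.1.ne').symm) measurableSet_Ioo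
  have heq : ∀ s ∈ Set.Ioo (0:ℝ) b, ENNReal.ofReal (s ^ (q-1)) * ENNReal.ofReal (b - s)
      = ENNReal.ofReal (s ^ (q-1) * (b - s)) := fun s hs =>
    (ENNReal.ofReal_mul (Real.rpow_nonneg hs.1.le _)).symm
  rw [setLIntegral_congr_fun measurableSet_Ioo heq,
    ← ofReal_integral_eq_lintegral_ofReal hInt ?_]
  · congr 1
    rw [setIntegral_congr_fun measurableSet_Ioo
        (fun s hs => aux_rpow_split hs.1.ne'),
      integral_sub ((hi1.const_mul b)) hi2, integral_const_mul,
      ← MeasureTheory.integral_Ioc_eq_integral_Ioo, ← MeasureTheory.integral_Ioc_eq_integral_Ioo,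
      ← intervalIntegral.integral_of_le hb.le, ← intervalIntegral.integral_of_le hb.le,
      integral_rpow (Or.inl (by linarith : (-1:ℝ) < q - 1)),
      integral_rpow (Or.inl (by linarith : (-1:ℝ) < q)),
      Real.zero_rpow (by linarith : q - 1 + 1 ≠ 0), Real.zero_rpow (by linarith : q + 1 ≠ 0)]
    have h4 : q - 1 + 1 = q := by ring
    rw [h4]
    have hbq : b ^ (q+1) = b ^ q * b := Real.rpow_add_one hb.ne' q
    field_simp
    rw [hbq]
    ring
  · filter_upwards [ae_restrict_mem measurableSet_Ioo] with s hs
    exact mul_nonneg (Real.rpow_nonneg hs.1.le _) (by linarith [hs.2])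

lemma aux_lint_rpow {c e : ℝ} (hc : 0 ≤ c) (he : -1 < e) :
    ∫⁻ s in Set.Ioo 0 c, ENNReal.ofReal (s ^ e) = ENNReal.ofReal (c ^ (e+1) / (e+1)) := by
  rcases eq_or_lt_of_le hc with h | hc
  · simp [← h, Real.zero_rpow (by linarith : e + 1 ≠ 0)]
  have hint : IntervalIntegrable (fun s : ℝ => s ^ e) volume 0 c := intervalIntegral.intervalIntegrable_rpow' he
  have hInt : IntegrableOn (fun s : ℝ => s ^ e) (Set.Ioo 0 c) volume :=
    ((intervalIntegrable_iff_integrableOn_Ioc_of_le hc.le).1 hint).mono_set Set.Ioo_subset_Ioc_self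
  rw [← ofReal_integral_eq_lintegral_ofReal hInt]
  · rw [← MeasureTheory.integral_Ioc_eq_integral_Ioo, ← intervalIntegral.integral_of_le hc.le,
      integral_rpow (Or.inl he), Real.zero_rpow (by linarith : e + 1 ≠ 0), sub_zero]
  · filter_upwards [ae_restrict_mem measurableSet_Ioo] with s hs
    exact Real.rpow_nonneg hs.1.le e

lemma aux_claim1 {q b : ℝ} (hq : 0 < q) (a : ℝ≥0∞) :
    ENNReal.ofReal q * ∫⁻ s in Set.Ioo 0 b,
      (if ENNReal.ofReal s < a then ENNReal.ofReal (s^(q-1)) else 0) ≤ a ^ q := by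
  rcases eq_or_ne a ⊤ with rfl | hatop
  · rw [ENNReal.top_rpow_of_pos hq]; exact le_top
  rcases eq_or_ne a 0 with rfl | ha0
  · have : ∀ s : ℝ, (if ENNReal.ofReal s < 0 then ENNReal.ofReal (s^(q-1)) else 0) = 0 := by
      intro s; simp
    simp only [this, lintegral_const, zero_mul, mul_zero]
    exact zero_le
  set c := a.toReal with hc
  have hcpos : 0 < c := ENNReal.toReal_pos ha0 hatop
  have hbound : ∫⁻ s in Set.Ioo 0 b,
      (if ENNReal.ofReal s < a then ENNReal.ofReal (s^(q-1)) else 0)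
      ≤ ∫⁻ s in Set.Ioo 0 c, ENNReal.ofReal (s^(q-1)) := by
    calc ∫⁻ s in Set.Ioo 0 b, (if ENNReal.ofReal s < a then ENNReal.ofReal (s^(q-1)) else 0)
        ≤ ∫⁻ s in Set.Ioo 0 b, (Set.Ioo (0:ℝ) c).indicator (fun s => ENNReal.ofReal (s^(q-1))) s := by
          refine lintegral_mono_ae ?_
          filter_upwards [ae_restrict_mem measurableSet_Ioo] with s hs
          split_ifs with h
          · have hsc : s < c := (ENNReal.ofReal_lt_iff_lt_toReal hs.1.le hatop).1 h
            rw [Set.indicator_of_mem (Set.mem_Ioo.2 ⟨hs.1, hsc⟩)]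
          · exact zero_le
      _ ≤ ∫⁻ s, (Set.Ioo (0:ℝ) c).indicator (fun s => ENNReal.ofReal (s^(q-1))) s :=
          setLIntegral_le_lintegral _ _
      _ = ∫⁻ s in Set.Ioo 0 c, ENNReal.ofReal (s^(q-1)) :=
          lintegral_indicator measurableSet_Ioo _
  calc ENNReal.ofReal q * ∫⁻ s in Set.Ioo 0 b,
        (if ENNReal.ofReal s < a then ENNReal.ofReal (s^(q-1)) else 0)
      ≤ ENNReal.ofReal q * ∫⁻ s in Set.Ioo 0 c, ENNReal.ofReal (s^(q-1)) :=
        mul_le_mul_right hbound _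
    _ = ENNReal.ofReal q * ENNReal.ofReal (c ^ q / q) := by
        rw [aux_lint_rpow hcpos.le (by linarith), show q - 1 + 1 = q by ring]
    _ = ENNReal.ofReal (c ^ q) := by
        rw [← ENNReal.ofReal_mul hq.le, mul_div_cancel₀ _ hq.ne']
    _ = a ^ q := by
        rw [← ENNReal.ofReal_rpow_of_pos hcpos, hc, ENNReal.ofReal_toReal hatop]

lemma aux_claim3 {g : ℝ → ℝ≥0∞} (hg : Measurable g) (sb : ℝ≥0∞)
    (hF : Measurable (fun t : ℝ => ∫⁻ u in Set.Ioi t, g u))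
    (hFanti : Antitone (fun t : ℝ => ∫⁻ u in Set.Ioi t, g u)) :
    (∫⁻ t in Set.Ioi (0:ℝ), g t)
      ≤ (∫⁻ t in {t : ℝ | sb < ∫⁻ u in Set.Ioi t, g u} ∩ Set.Ioi 0, g t) + sb := by
  set F : ℝ → ℝ≥0∞ := fun t => ∫⁻ u in Set.Ioi t, g u with hFdef
  set η : Measure ℝ := volume.withDensity g with hη
  have hηap : ∀ S : Set ℝ, MeasurableSet S → η S = ∫⁻ t in S, g t := fun S hS =>
    withDensity_apply g hS
  have hA : MeasurableSet {t : ℝ | sb < F t} := measurableSet_lt measurable_const hF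
  set A := {t : ℝ | sb < F t} ∩ Set.Ioi 0 with hAdef
  have hAm : MeasurableSet A := hA.inter measurableSet_Ioi
  set B := Set.Ioi (0:ℝ) \ A with hBdef
  have hsplit : η (Set.Ioi (0:ℝ)) = η A + η B := by
    rw [hBdef]
    have h1 : Set.Ioi (0:ℝ) ∩ A = A := Set.inter_eq_right.2 Set.inter_subset_right
    rw [← measure_inter_add_diff (Set.Ioi (0:ℝ)) hAm, h1]
  have hBle : η B ≤ sb := by
    rcases Set.eq_empty_or_nonempty B with hBe | hBne
    · simp [hBe]
    have hBsub : B ⊆ Set.Ioi (0:ℝ) := Set.diff_subset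
    have hbdd : BddBelow B := ⟨0, fun t ht => (hBsub ht).le⟩
    set t0 := sInf B with ht0
    have hFs : ∀ t, t0 < t → F t ≤ sb := by
      intro t ht
      obtain ⟨u, hu, hut⟩ := exists_lt_of_csInf_lt hBne ht
      have hu0 : (0:ℝ) < u := hBsub hu
      have hFu : F u ≤ sb := by
        have hna : u ∉ A := hu.2
        rw [hAdef] at hna
        simp only [Set.mem_inter_iff, Set.mem_setOf_eq, Set.mem_Ioi, not_and] at hna
        exact not_lt.1 (fun hcon => (hna hcon) hu0)
      exact le_trans (hFanti hut.le) hFu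
    have hBsubIci : B ⊆ Set.Ici t0 := fun t ht => csInf_le hbdd ht
    have hIoi : η (Set.Ioi t0) ≤ sb := by
      have hun : Set.Ioi t0 = ⋃ n : ℕ, Set.Ioi (t0 + 1/(n+1)) := by
        ext t
        simp only [Set.mem_Ioi, Set.mem_iUnion]
        constructor
        · intro ht
          obtain ⟨n, hn⟩ := exists_nat_one_div_lt (sub_pos.2 ht)
          exact ⟨n, by push_cast at hn ⊢; linarith⟩
        · rintro ⟨n, hn⟩
          have h2 : (0:ℝ) < 1/((n:ℝ)+1) := by positivity
          linarith
      have hmono : Monotone (fun n : ℕ => Set.Ioi (t0 + 1/((n:ℝ)+1))) := by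
        intro m k hmk
        apply Set.Ioi_subset_Ioi
        have h1 : (1:ℝ)/((k:ℝ)+1) ≤ 1/((m:ℝ)+1) := by
          apply one_div_le_one_div_of_le (by positivity)
          have := (Nat.cast_le (α := ℝ)).2 hmk
          linarith
        linarith
      rw [hun, hmono.directed_le.measure_iUnion]
      refine iSup_le fun n => ?_
      rw [hηap _ measurableSet_Ioi]
      exact hFs _ (lt_add_of_pos_right t0 (by positivity))
    have hsingleton : η {t0} = 0 :=
      withDensity_absolutelyContinuous volume g (measure_singleton t0)
    calc η B ≤ η (Set.Ici t0) := measure_mono hBsubIci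
      _ ≤ η {t0} + η (Set.Ioi t0) := by
          rw [show Set.Ici t0 = {t0} ∪ Set.Ioi t0 by
            ext t; simp [le_iff_lt_or_eq, or_comm, eq_comm]]
          exact measure_union_le _ _
      _ ≤ sb := by rw [hsingleton, zero_add]; exact hIoi
  calc (∫⁻ t in Set.Ioi (0:ℝ), g t) = η (Set.Ioi 0) := (hηap _ measurableSet_Ioi).symm
    _ = η A + η B := hsplit
    _ ≤ η A + sb := add_le_add_right hBle _
    _ = (∫⁻ t in A, g t) + sb := by rw [hηap _ hAm]

/-- Main step : for every positive `b` with `ofReal b ≤ F 0`,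
`ofReal (b^(q+1)/(q+1)) ≤ ∫⁻ t in Ioi 0, (F t)^q * g t`. -/
lemma aux_stepb {g : ℝ → ℝ≥0∞} (hg : Measurable g) {q : ℝ} (hq : 0 < q)
    {b : ℝ} (hb : 0 < b) (hbF : ENNReal.ofReal b ≤ ∫⁻ t in Set.Ioi (0:ℝ), g t) :
    ENNReal.ofReal (b ^ (q+1) / (q+1))
      ≤ ∫⁻ t in Set.Ioi (0:ℝ), (∫⁻ u in Set.Ioi t, g u) ^ q * g t := by
  set F : ℝ → ℝ≥0∞ := fun t => ∫⁻ u in Set.Ioi t, g u with hFdef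
  have hFanti : Antitone F := fun t t' h => lintegral_mono_set (Set.Ioi_subset_Ioi h)
  have hFmeas : Measurable F := hFanti.measurable
  -- measurability of the double integrand
  have hset : MeasurableSet {p : ℝ × ℝ | ENNReal.ofReal p.2 < F p.1} :=
    measurableSet_lt (ENNReal.measurable_ofReal.comp measurable_snd)
      (hFmeas.comp measurable_fst)
  have hmeas2 : Measurable (fun p : ℝ × ℝ =>
      (if ENNReal.ofReal p.2 < F p.1 then ENNReal.ofReal (p.2 ^ (q-1)) else 0) * g p.1) := by
    apply Measurable.mul
    · exact Measurable.ite hset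
        ((ENNReal.measurable_ofReal).comp ((measurable_snd).pow measurable_const)) measurable_const
    · exact hg.comp measurable_fst
  have step1 : ∀ t : ℝ,
      ENNReal.ofReal q * ((∫⁻ s in Set.Ioo 0 b,
        (if ENNReal.ofReal s < F t then ENNReal.ofReal (s^(q-1)) else 0)) * g t)
      ≤ (F t) ^ q * g t := by
    intro t
    rw [← mul_assoc]
    exact mul_le_mul_left (aux_claim1 hq (F t)) _
  calc ENNReal.ofReal (b ^ (q+1) / (q+1))
      = ENNReal.ofReal q * ENNReal.ofReal (b ^ (q+1) / (q*(q+1))) := by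
        rw [← ENNReal.ofReal_mul hq.le]
        congr 1
        field_simp
    _ = ENNReal.ofReal q * ∫⁻ s in Set.Ioo 0 b,
          ENNReal.ofReal (s ^ (q-1)) * ENNReal.ofReal (b - s) := by
        rw [aux_lint_rpow_mul hb hq]
    _ ≤ ENNReal.ofReal q * ∫⁻ s in Set.Ioo 0 b,
          ENNReal.ofReal (s ^ (q-1)) * ∫⁻ t in {t : ℝ | ENNReal.ofReal s < F t} ∩ Set.Ioi 0, g t := by
        refine mul_le_mul_right (lintegral_mono_ae ?_) _
        filter_upwards [ae_restrict_mem measurableSet_Ioo] with s hs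
        refine mul_le_mul_right ?_ _
        have h3 := aux_claim3 hg (ENNReal.ofReal s) hFmeas hFanti
        calc ENNReal.ofReal (b - s) = ENNReal.ofReal b - ENNReal.ofReal s :=
            ENNReal.ofReal_sub _ hs.1.le
          _ ≤ ∫⁻ t in {t : ℝ | ENNReal.ofReal s < F t} ∩ Set.Ioi 0, g t :=
            tsub_le_iff_right.2 (hbF.trans h3)
    _ = ENNReal.ofReal q * ∫⁻ s in Set.Ioo 0 b, ∫⁻ t in Set.Ioi (0:ℝ),
          (if ENNReal.ofReal s < F t then ENNReal.ofReal (s^(q-1)) else 0) * g t := by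
        congr 1
        refine lintegral_congr_ae ?_
        filter_upwards [ae_restrict_mem measurableSet_Ioo] with s _
        have hricond : MeasurableSet {t : ℝ | ENNReal.ofReal s < F t} :=
          measurableSet_lt measurable_const hFmeas
        rw [show (fun t => (if ENNReal.ofReal s < F t then ENNReal.ofReal (s^(q-1)) else 0) * g t)
            = (fun t => ENNReal.ofReal (s^(q-1)) * ({t : ℝ | ENNReal.ofReal s < F t}.indicator g t)) by
          funext t
          by_cases h : ENNReal.ofReal s < F t <;>
            simp [Set.indicator_apply, Set.mem_setOf_eq, h, mul_comm]]
        rw [lintegral_const_mul' _ _ ENNReal.ofReal_ne_top, lintegral_indicator hricond,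
          Measure.restrict_restrict hricond]
    _ = ENNReal.ofReal q * ∫⁻ t in Set.Ioi (0:ℝ), ∫⁻ s in Set.Ioo 0 b,
          (if ENNReal.ofReal s < F t then ENNReal.ofReal (s^(q-1)) else 0) * g t := by
        congr 1
        exact (lintegral_lintegral_swap (hmeas2.aemeasurable)).symm
    _ = ∫⁻ t in Set.Ioi (0:ℝ), ENNReal.ofReal q * ((∫⁻ s in Set.Ioo 0 b,
          (if ENNReal.ofReal s < F t then ENNReal.ofReal (s^(q-1)) else 0)) * g t) := by
        rw [← lintegral_const_mul' _ _ ENNReal.ofReal_ne_top]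
        congr 1
        funext t
        congr 1
        exact lintegral_mul_const _ (Measurable.ite
          (measurableSet_lt ENNReal.measurable_ofReal measurable_const)
          (ENNReal.measurable_ofReal.comp (measurable_id.pow measurable_const)) measurable_const)
    _ ≤ ∫⁻ t in Set.Ioi (0:ℝ), (F t) ^ q * g t := lintegral_mono step1

lemma aux_key {g : ℝ → ℝ≥0∞} (hg : Measurable g) {q : ℝ} (hq : 0 < q) :
    ENNReal.ofReal (Real.exp (-1)) ^ q * (∫⁻ t in Set.Ioi (0:ℝ), g t) ^ (q+1)
      ≤ ∫⁻ t in Set.Ioi (0:ℝ), (∫⁻ u in Set.Ioi t, g u) ^ q * g t := by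
  set F0 := ∫⁻ t in Set.Ioi (0:ℝ), g t with hF0
  rcases eq_or_ne F0 0 with h0 | h0
  · rw [h0, ENNReal.zero_rpow_of_pos (by linarith), mul_zero]
    exact zero_le
  rcases eq_or_ne F0 ⊤ with htop | htop
  · have : (∫⁻ t in Set.Ioi (0:ℝ), (∫⁻ u in Set.Ioi t, g u) ^ q * g t) = ⊤ := by
      apply ENNReal.eq_top_of_forall_nnreal_le
      intro rr
      set b : ℝ := ((q+1) * (rr+1)) ^ (q+1)⁻¹ with hbdef
      have hb : 0 < b := Real.rpow_pos_of_pos (by positivity) _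
      have hbq : b ^ (q+1) = (q+1) * (rr+1) :=
        Real.rpow_inv_rpow (by positivity) (by linarith)
      have h1 : ENNReal.ofReal b ≤ F0 := htop ▸ le_top
      have := aux_stepb hg hq hb h1
      refine le_trans ?_ this
      have h2 : b ^ (q+1) / (q+1) = (rr:ℝ) + 1 := by rw [hbq]; field_simp
      rw [h2]
      calc (rr : ℝ≥0∞) = ENNReal.ofReal rr := (ENNReal.ofReal_coe_nnreal (p := rr)).symm
        _ ≤ ENNReal.ofReal ((rr:ℝ) + 1) := ENNReal.ofReal_le_ofReal (by linarith)
    rw [this]; exact le_top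
  · set b := F0.toReal with hbdef
    have hb : 0 < b := ENNReal.toReal_pos h0 htop
    have hob : ENNReal.ofReal b = F0 := ENNReal.ofReal_toReal htop
    have hstep := aux_stepb hg hq hb hob.le
    refine le_trans ?_ hstep
    have hexp : ENNReal.ofReal (Real.exp (-1)) ^ q = ENNReal.ofReal (Real.exp (-q)) := by
      rw [ENNReal.ofReal_rpow_of_pos (Real.exp_pos _)]
      congr 1
      rw [Real.rpow_def_of_pos (Real.exp_pos _), Real.log_exp]
      ring_nf
    have hFq : F0 ^ (q+1) = ENNReal.ofReal (b ^ (q+1)) := by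
      rw [← hob, ENNReal.ofReal_rpow_of_pos hb]
    rw [hexp, hFq, ← ENNReal.ofReal_mul (Real.exp_nonneg _)]
    apply ENNReal.ofReal_le_ofReal
    rw [div_eq_mul_inv, mul_comm (b ^ (q+1))]
    apply mul_le_mul_of_nonneg_right _ (Real.rpow_nonneg hb.le _)
    rw [Real.exp_neg]
    exact inv_anti₀ (by linarith) (by linarith [Real.add_one_le_exp q])

lemma aux_scale (ψ : ℝ → ℝ≥0∞) (t : ℝ) :
    ∫⁻ s in Set.Ioi (2*t), ψ (s/2) = 2 * ∫⁻ u in Set.Ioi t, ψ u := by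
  have hemb : MeasurableEmbedding (fun u : ℝ => 2*u) :=
    (Homeomorph.mulLeft₀ (2:ℝ) two_ne_zero).measurableEmbedding
  have hpre : (fun u : ℝ => 2*u) ⁻¹' (Set.Ioi (2*t)) = Set.Ioi t := by
    ext u; simp only [Set.mem_preimage, Set.mem_Ioi]; constructor <;> intro h <;> linarith
  have hmap : Measure.map (fun u : ℝ => 2*u) (volume.restrict (Set.Ioi t))
      = ENNReal.ofReal |(2:ℝ)⁻¹| • volume.restrict (Set.Ioi (2*t)) := by
    rw [← hpre, ← Measure.restrict_map (measurable_const_mul 2) measurableSet_Ioi,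
      Real.map_volume_mul_left (two_ne_zero), Measure.restrict_smul]
  have h1 : ∫⁻ u in Set.Ioi t, ψ u
      = ENNReal.ofReal |(2:ℝ)⁻¹| * ∫⁻ s in Set.Ioi (2*t), ψ (s/2) := by
    have : ∀ u : ℝ, ψ u = ψ ((2*u)/2) := by intro u; congr 1; field_simp
    calc ∫⁻ u in Set.Ioi t, ψ u = ∫⁻ u in Set.Ioi t, (fun s => ψ (s/2)) (2*u) := by
          refine lintegral_congr fun u => ?_
          exact this u
      _ = ∫⁻ s, ψ (s/2) ∂(Measure.map (fun u : ℝ => 2*u) (volume.restrict (Set.Ioi t))) :=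
          (hemb.lintegral_map (fun s => ψ (s/2))).symm
      _ = ENNReal.ofReal |(2:ℝ)⁻¹| * ∫⁻ s in Set.Ioi (2*t), ψ (s/2) := by
          rw [hmap, lintegral_smul_measure, smul_eq_mul]
  rw [h1, ← mul_assoc]
  have : (2:ℝ≥0∞) * ENNReal.ofReal |(2:ℝ)⁻¹| = 1 := by
    rw [abs_of_pos (by norm_num : (0:ℝ) < 2⁻¹)]
    rw [ENNReal.ofReal_inv_of_pos (by norm_num : (0:ℝ) < 2)]
    norm_num
    rw [ENNReal.mul_inv_cancel (by norm_num) (by norm_num)]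
  rw [this, one_mul]

end aux

theorem wolff_iterated_lower_bound (n : ℕ) (α p : ℝ) (hp : 1 < p) (hαp : 0 < α * p)
    (hαpn : α * p < n) :
    ∃ κ : ℝ, 0 < κ ∧
      ∀ (ω : Measure (EuclideanSpace ℝ (Fin n))) (r : ℝ), 0 < r →
        ∀ x, ENNReal.ofReal κ ^ (r / (p - 1)) * (wolff n α p ω x) ^ (r / (p - 1) + 1) ≤
          wolff n α p (ω.withDensity fun y => (wolff n α p ω y) ^ r) x := by
  have hp1 : (0:ℝ) < p - 1 := by linarith
  set a : ℝ := (n:ℝ) - α * p with hadef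
  have hapos : 0 < a := by simp only [hadef]; linarith
  set δ : ℝ := 1/(p-1) with hδdef
  have hδ : 0 < δ := by positivity
  set c₁ : ℝ := (2:ℝ) ^ (-(a/(p-1))) with hc₁def
  have hc₁pos : 0 < c₁ := Real.rpow_pos_of_pos (by norm_num) _
  refine ⟨c₁ * Real.exp (-1), by positivity, ?_⟩
  intro ω r hr x
  set q : ℝ := r/(p-1) with hqdef
  have hq : 0 < q := by positivity
  set g : ℝ → ℝ≥0∞ := fun t =>
    (ω (ball x t) / ENNReal.ofReal (t ^ a)) ^ δ / ENNReal.ofReal t with hgdef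
  have hgmeas : Measurable g := by
    have h1 : Measurable fun t : ℝ => ω (ball x t) :=
      Monotone.measurable (fun s t hst => measure_mono (ball_subset_ball hst))
    exact ((h1.div (ENNReal.measurable_ofReal.comp
      (measurable_id.pow measurable_const))).pow measurable_const).div
      (ENNReal.measurable_ofReal.comp measurable_id)
  set F : ℝ → ℝ≥0∞ := fun t => ∫⁻ u in Set.Ioi t, g u with hFdef
  have hwolff : wolff n α p ω x = ∫⁻ t in Set.Ioi (0:ℝ), g t := rfl
  set ν : Measure (EuclideanSpace ℝ (Fin n)) :=
    ω.withDensity fun y => (wolff n α p ω y) ^ r with hνdef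
  -- the scaled integrand
  set ψ : ℝ → ℝ≥0∞ := fun u =>
    (ω (ball x u) / ENNReal.ofReal ((2*u) ^ a)) ^ δ / ENNReal.ofReal (2*u) with hψdef
  have hψg : ∀ u : ℝ, 0 < u → ψ u = ENNReal.ofReal (c₁/2) * g u := by
    intro u hu
    have hc0 : ENNReal.ofReal ((2:ℝ)^a) ≠ 0 := by
      simp only [ne_eq, ENNReal.ofReal_eq_zero, not_le]
      positivity
    have hcT : ENNReal.ofReal ((2:ℝ)^a) ≠ ⊤ := ENNReal.ofReal_ne_top
    have h2a : ((2*u) : ℝ)^a = 2^a * u^a := Real.mul_rpow (by norm_num) hu.le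
    have e1 : ENNReal.ofReal ((2*u)^a) = ENNReal.ofReal ((2:ℝ)^a) * ENNReal.ofReal (u^a) := by
      rw [h2a, ENNReal.ofReal_mul (by positivity)]
    have e2 : ENNReal.ofReal (2*u) = 2 * ENNReal.ofReal u := by
      rw [ENNReal.ofReal_mul (by norm_num : (0:ℝ) ≤ 2), ENNReal.ofReal_ofNat]
    have e3 : ω (ball x u) / (ENNReal.ofReal ((2:ℝ)^a) * ENNReal.ofReal (u^a))
        = (ω (ball x u) / ENNReal.ofReal (u^a)) * (ENNReal.ofReal ((2:ℝ)^a))⁻¹ := by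
      rw [div_eq_mul_inv, div_eq_mul_inv, ENNReal.mul_inv (Or.inl hc0) (Or.inl hcT)]
      ring
    have e4 : (ENNReal.ofReal ((2:ℝ)^a))⁻¹ ^ δ = ENNReal.ofReal ((2:ℝ)^(-(a*δ))) := by
      rw [← ENNReal.ofReal_inv_of_pos (by positivity),
        ← Real.rpow_neg (by norm_num : (0:ℝ) ≤ 2) a,
        ENNReal.ofReal_rpow_of_pos (by positivity)]
      congr 1
      rw [← Real.rpow_mul (by norm_num : (0:ℝ) ≤ 2)]
      ring_nf
    simp only [hψdef, hgdef]
    rw [e1, e2, e3, ENNReal.mul_rpow_of_nonneg _ _ hδ.le, e4]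
    have e5 : ENNReal.ofReal (c₁/2) = ENNReal.ofReal ((2:ℝ)^(-(a*δ))) * 2⁻¹ := by
      rw [div_eq_mul_inv, ENNReal.ofReal_mul (by positivity),
        ENNReal.ofReal_inv_of_pos (by norm_num : (0:ℝ) < 2), ENNReal.ofReal_ofNat]
      congr 2
      rw [hc₁def]
      congr 1
      rw [hδdef]
      field_simp
    rw [e5]
    simp only [div_eq_mul_inv]
    rw [ENNReal.mul_inv (Or.inl (two_ne_zero : (2:ℝ≥0∞) ≠ 0))
      (Or.inl (by norm_num : (2:ℝ≥0∞) ≠ ⊤))]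
    ring
  -- geometric lemma
  have hgeom : ∀ t : ℝ, 0 < t → ∀ y ∈ ball x t,
      ENNReal.ofReal c₁ * F t ≤ wolff n α p ω y := by
    intro t ht y hy
    have hsub : (∫⁻ s in Set.Ioi (2*t),
        (ω (ball y s) / ENNReal.ofReal (s ^ a)) ^ δ / ENNReal.ofReal s)
        ≤ wolff n α p ω y :=
      lintegral_mono_set (Set.Ioi_subset_Ioi (by linarith))
    have hpt : ∀ s : ℝ, s ∈ Set.Ioi (2*t) →
        ψ (s/2) ≤ (ω (ball y s) / ENNReal.ofReal (s ^ a)) ^ δ / ENNReal.ofReal s := by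
      intro s hs
      rw [Set.mem_Ioi] at hs
      have hs0 : (0:ℝ) < s := by linarith
      have h22 : 2 * (s/2) = s := by ring
      have hball : ball x (s/2) ⊆ ball y s := by
        apply ball_subset_ball'
        have : dist x y < t := by
          rw [dist_comm]
          exact mem_ball.1 hy
        linarith
      simp only [hψdef, h22]
      exact ENNReal.div_le_div_right (ENNReal.rpow_le_rpow
        (ENNReal.div_le_div_right (measure_mono hball) _) hδ.le) _
    calc ENNReal.ofReal c₁ * F t = 2 * (ENNReal.ofReal (c₁/2) * F t) := by
          rw [← mul_assoc]
          congr 1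
          rw [show (2:ℝ≥0∞) = ENNReal.ofReal 2 from (ENNReal.ofReal_ofNat 2).symm,
            ← ENNReal.ofReal_mul (by norm_num)]
          congr 1
          field_simp
      _ = 2 * ∫⁻ u in Set.Ioi t, ENNReal.ofReal (c₁/2) * g u := by
          rw [lintegral_const_mul' _ _ ENNReal.ofReal_ne_top]
      _ = 2 * ∫⁻ u in Set.Ioi t, ψ u := by
          congr 1
          refine lintegral_congr_ae ?_
          filter_upwards [ae_restrict_mem measurableSet_Ioi] with u hu
          exact (hψg u (lt_trans ht hu)).symm
      _ = ∫⁻ s in Set.Ioi (2*t), ψ (s/2) := (aux_scale ψ t).symm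
      _ ≤ ∫⁻ s in Set.Ioi (2*t),
            (ω (ball y s) / ENNReal.ofReal (s ^ a)) ^ δ / ENNReal.ofReal s := by
          refine lintegral_mono_ae ?_
          filter_upwards [ae_restrict_mem measurableSet_Ioi] with s hs
          exact hpt s hs
      _ ≤ wolff n α p ω y := hsub
  -- step B : lower bound for the measure of balls under ν
  have hνball : ∀ t : ℝ, 0 < t →
      (ENNReal.ofReal c₁ * F t) ^ r * ω (ball x t) ≤ ν (ball x t) := by
    intro t ht
    rw [hνdef, withDensity_apply _ measurableSet_ball]
    calc (ENNReal.ofReal c₁ * F t) ^ r * ω (ball x t)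
        = ∫⁻ _ in ball x t, (ENNReal.ofReal c₁ * F t) ^ r ∂ω := (setLIntegral_const _ _).symm
      _ ≤ ∫⁻ y in ball x t, (wolff n α p ω y) ^ r ∂ω := by
          refine lintegral_mono_ae ?_
          filter_upwards [ae_restrict_mem measurableSet_ball] with y hy
          exact ENNReal.rpow_le_rpow (hgeom t ht y hy) hr.le
  have hrδ : r * δ = q := by rw [hδdef, hqdef, mul_one_div]
  -- step C : pointwise bound on the integrand of `wolff ν`
  have hC : ∀ t : ℝ, t ∈ Set.Ioi (0:ℝ) →
      ENNReal.ofReal c₁ ^ q * (F t ^ q * g t)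
        ≤ (ν (ball x t) / ENNReal.ofReal (t ^ a)) ^ δ / ENNReal.ofReal t := by
    intro t ht
    rw [Set.mem_Ioi] at ht
    have h1 : ((ENNReal.ofReal c₁ * F t) ^ r * ω (ball x t) / ENNReal.ofReal (t ^ a)) ^ δ
          / ENNReal.ofReal t = ENNReal.ofReal c₁ ^ q * (F t ^ q * g t) := by
      calc ((ENNReal.ofReal c₁ * F t) ^ r * ω (ball x t) / ENNReal.ofReal (t ^ a)) ^ δ
            / ENNReal.ofReal t
          = (((ENNReal.ofReal c₁ * F t) ^ r) ^ δ
              * (ω (ball x t) / ENNReal.ofReal (t ^ a)) ^ δ) / ENNReal.ofReal t := by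
            rw [mul_div_assoc, ENNReal.mul_rpow_of_nonneg _ _ hδ.le]
        _ = ((ENNReal.ofReal c₁ * F t) ^ q
              * (ω (ball x t) / ENNReal.ofReal (t ^ a)) ^ δ) / ENNReal.ofReal t := by
            rw [← ENNReal.rpow_mul, hrδ]
        _ = ((ENNReal.ofReal c₁ ^ q * F t ^ q)
              * (ω (ball x t) / ENNReal.ofReal (t ^ a)) ^ δ) / ENNReal.ofReal t := by
            rw [ENNReal.mul_rpow_of_nonneg _ _ hq.le]
        _ = ENNReal.ofReal c₁ ^ q * (F t ^ q * g t) := by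
            rw [hgdef]
            simp only [div_eq_mul_inv]
            ring
    rw [← h1]
    exact ENNReal.div_le_div_right (ENNReal.rpow_le_rpow
      (ENNReal.div_le_div_right (hνball t ht) _) hδ.le) _
  have hc₁top : ENNReal.ofReal c₁ ^ q ≠ ⊤ :=
    ENNReal.rpow_ne_top_of_nonneg hq.le ENNReal.ofReal_ne_top
  calc ENNReal.ofReal (c₁ * Real.exp (-1)) ^ q * (wolff n α p ω x) ^ (q + 1)
      = ENNReal.ofReal c₁ ^ q
          * (ENNReal.ofReal (Real.exp (-1)) ^ q * (∫⁻ t in Set.Ioi (0:ℝ), g t) ^ (q+1)) := by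
        rw [ENNReal.ofReal_mul hc₁pos.le, ENNReal.mul_rpow_of_nonneg _ _ hq.le, hwolff,
          mul_assoc]
    _ ≤ ENNReal.ofReal c₁ ^ q * ∫⁻ t in Set.Ioi (0:ℝ), F t ^ q * g t :=
        mul_le_mul_right (aux_key hgmeas hq) _
    _ = ∫⁻ t in Set.Ioi (0:ℝ), ENNReal.ofReal c₁ ^ q * (F t ^ q * g t) :=
        (lintegral_const_mul' _ _ hc₁top).symm
    _ ≤ ∫⁻ t in Set.Ioi (0:ℝ),
          (ν (ball x t) / ENNReal.ofReal (t ^ a)) ^ δ / ENNReal.ofReal t := by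
        refine lintegral_mono_ae ?_
        filter_upwards [ae_restrict_mem measurableSet_Ioi] with t ht
        exact hC t ht
    _ = wolff n α p ν x := rfl
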